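/- Let u_{ijt} be independent mean-zero random variables with |u_{ijt}| ≤ 1, for i,j ∈ {1,…,N}, t ∈ {1,…,T}. Define S = Σ_{i,t} (Σ_j u_{ijt})³. Then E[S²] ≤ C·N³T·(N² T + 1) ≤ C'(NT)³ for universal constants (under N ≍ T), because E[S²] splits into a diagonal term of order N³T·N² and a cross term involving products of third moments. -/

import Mathlib

open MeasureTheory ProbabilityTheory

open MeasureTheory ProbabilityTheory Finset

section Aux

variable {Ω : Type} [MeasureSpace Ω]

lemma my_integrable_of_bound [IsProbabilityMeasure (volume : Measure Ω)] {h : Ω → ℝ} {c : ℝ}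
    (hm : Measurable h) (hb : ∀ᵐ ω ∂(volume : Measure Ω), |h ω| ≤ c) : Integrable h := by
  exact (integrable_const c).mono' hm.aestronglyMeasurable (by simpa [Real.norm_eq_abs] using hb)

lemma my_abs_integral_le [IsProbabilityMeasure (volume : Measure Ω)] {h : Ω → ℝ} {c : ℝ}
    (hm : Measurable h) (hc : 0 ≤ c) (hb : ∀ᵐ ω ∂(volume : Measure Ω), |h ω| ≤ c) :
    |∫ ω, h ω| ≤ c := by
  have h1 : |∫ ω, h ω| ≤ ∫ ω, |h ω| := by
    simpa [Real.norm_eq_abs] using norm_integral_le_integral_norm h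
  have h2 : ∫ ω, |h ω| ≤ ∫ _ω, c :=
    integral_mono_ae (my_integrable_of_bound hm hb).abs (integrable_const c)
      hb
  simpa using h1.trans h2

lemma prod_bound {n : ℕ} {h : Fin n → Ω → ℝ}
    (hb : ∀ k, ∀ᵐ ω ∂(volume : Measure Ω), |h k ω| ≤ 1) :
    ∀ᵐ ω ∂(volume : Measure Ω), |∏ k, h k ω| ≤ 1 := by
  filter_upwards [ae_all_iff.2 hb] with ω hω
  rw [abs_prod]
  exact Finset.prod_le_one (fun k _ => abs_nonneg _) (fun k _ => hω k)

variable {ι : Type} {f : ι → Ω → ℝ}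

/-- expectation of a product with a "singleton" factor vanishes -/
lemma integral_prod_eq_zero [IsProbabilityMeasure (volume : Measure Ω)]
    (hindep : iIndepFun f volume)
    (hmeas : ∀ i, Measurable (f i))
    (hbd : ∀ i, ∀ᵐ ω ∂(volume : Measure Ω), |f i ω| ≤ 1)
    (hmean : ∀ i, ∫ ω, f i ω = 0)
    {n : ℕ} (g : Fin n → ι) (k0 : Fin n) (hk0 : ∀ k, k ≠ k0 → g k ≠ g k0) :
    ∫ ω, ∏ k, f (g k) ω = 0 := by
  classical
  set Y : Ω → ℝ := fun ω => ∏ k ∈ Finset.univ.erase k0, f (g k) ω with hY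
  have hsplit : ∀ ω, ∏ k, f (g k) ω = f (g k0) ω * Y ω := by
    intro ω
    exact (Finset.mul_prod_erase Finset.univ _ (Finset.mem_univ k0)).symm
  set S : Finset ι := {g k0} with hS
  set Tt : Finset ι := (Finset.univ.erase k0).image g with hT
  have hdisj : Disjoint S Tt := by
    simp only [hS, Finset.disjoint_singleton_left, hT, Finset.mem_image]
    rintro ⟨k, hk, hgk⟩
    exact hk0 k (Finset.mem_erase.1 hk).1 hgk
  have base := hindep.indepFun_finset S Tt hdisj hmeas
  have hYmeas : Measurable Y :=
    Finset.measurable_prod _ (fun k _ => hmeas (g k))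
  have hindep2 : IndepFun (f (g k0)) Y volume := by
    have hφ : Measurable (fun v : S → ℝ => v ⟨g k0, by simp [hS]⟩) := measurable_pi_apply _
    have hψ : Measurable (fun v : Tt → ℝ =>
        ∏ k ∈ (Finset.univ.erase k0).attach, v ⟨g k.1, Finset.mem_image_of_mem g k.2⟩) :=
      Finset.measurable_prod _ (fun k _ => measurable_pi_apply _)
    have hcomp := base.comp hφ hψ
    have heq : ((fun v : Tt → ℝ =>
        ∏ k ∈ (Finset.univ.erase k0).attach, v ⟨g k.1, Finset.mem_image_of_mem g k.2⟩)
          ∘ (fun a (i : Tt) => f i a)) = Y := by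
      funext a
      rw [hY]
      exact Finset.prod_attach _ (fun k => f (g k) a)
    rw [heq] at hcomp
    exact hcomp
  have hXint : Integrable (f (g k0)) := my_integrable_of_bound (hmeas _) (hbd _)
  have hYbd : ∀ᵐ ω ∂(volume : Measure Ω), |Y ω| ≤ 1 := by
    filter_upwards [ae_all_iff.2 (fun k : Fin n => hbd (g k))] with ω hω
    rw [hY, abs_prod]
    exact Finset.prod_le_one (fun k _ => abs_nonneg _) (fun k _ => hω k)
  have hYint : Integrable Y := my_integrable_of_bound hYmeas hYbd
  have := hindep2.integral_mul_eq_mul_integral hXint.1 hYint.1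
  have hmul : ∫ ω, ∏ k, f (g k) ω = ∫ ω, (f (g k0) * Y) ω := by
    congr 1; ext ω; simpa using hsplit ω
  rw [hmul, this, hmean]
  ring

end Aux

/-- counting: functions with no singleton value have small count -/
lemma card_nosingleton (N n : ℕ) (hn : 0 < n) :
    (Finset.univ.filter (fun h : Fin n → Fin N => ∀ k, ∃ l, l ≠ k ∧ h l = h k)).card
      ≤ N ^ (n / 2) * (n / 2) ^ n := by
  classical
  have key : ∀ h ∈ (Finset.univ.filter
      (fun h : Fin n → Fin N => ∀ k, ∃ l, l ≠ k ∧ h l = h k)),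
      h ∈ Finset.univ.image
        (fun p : (Fin (n/2) → Fin N) × (Fin n → Fin (n/2)) => p.1 ∘ p.2) := by
    intro h hh
    rw [Finset.mem_filter] at hh
    obtain ⟨-, hns⟩ := hh
    set A : Finset (Fin N) := Finset.univ.image h with hA
    have hcardA : A.card ≤ n / 2 := by
      have hsum : ∑ a ∈ A, (Finset.univ.filter (fun k => h k = a)).card = n := by
        rw [← Finset.card_eq_sum_card_fiberwise (fun x _ => Finset.mem_image_of_mem h (Finset.mem_univ x))]
        simp
      have hfib : ∀ a ∈ A, 2 ≤ (Finset.univ.filter (fun k => h k = a)).card := by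
        intro a ha
        rw [hA, Finset.mem_image] at ha
        obtain ⟨k, -, hk⟩ := ha
        obtain ⟨l, hlk, hl⟩ := hns k
        have hsub : ({l, k} : Finset (Fin n)) ⊆ Finset.univ.filter (fun k' => h k' = a) := by
          intro x hx
          simp only [Finset.mem_insert, Finset.mem_singleton] at hx
          rcases hx with rfl | rfl <;> simp [hl, hk]
        calc 2 = ({l, k} : Finset (Fin n)).card := by rw [Finset.card_insert_of_notMem (by simpa using hlk)]; simp
        _ ≤ _ := Finset.card_le_card hsub
      have : 2 * A.card ≤ n := by
        calc 2 * A.card = ∑ _a ∈ A, 2 := by simp [mul_comm]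
        _ ≤ ∑ a ∈ A, (Finset.univ.filter (fun k => h k = a)).card := Finset.sum_le_sum hfib
        _ = n := hsum
      omega
    have hcard' : Fintype.card A ≤ Fintype.card (Fin (n/2)) := by
      simpa using hcardA
    obtain ⟨e⟩ := Function.Embedding.nonempty_of_card_le hcard'
    have hmemA : ∀ k, h k ∈ A := fun k => Finset.mem_image_of_mem h (Finset.mem_univ k)
    have hjunk : Fin N := h ⟨0, hn⟩
    refine Finset.mem_image.2 ⟨⟨fun m =>
      if hm : ∃ a : A, e a = m then hm.choose.1 else hjunk,
      fun k => e ⟨h k, hmemA k⟩⟩, Finset.mem_univ _, ?_⟩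
    ext k
    simp only [Function.comp_apply]
    have hex : ∃ a : A, e a = e ⟨h k, hmemA k⟩ := ⟨⟨h k, hmemA k⟩, rfl⟩
    rw [dif_pos hex]
    have := hex.choose_spec
    have : hex.choose = ⟨h k, hmemA k⟩ := e.injective this
    rw [this]
  calc (Finset.univ.filter (fun h : Fin n → Fin N => ∀ k, ∃ l, l ≠ k ∧ h l = h k)).card
      ≤ (Finset.univ.image
        (fun p : (Fin (n/2) → Fin N) × (Fin n → Fin (n/2)) => p.1 ∘ p.2)).card :=
        Finset.card_le_card key
    _ ≤ Fintype.card ((Fin (n/2) → Fin N) × (Fin n → Fin (n/2))) :=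
        le_trans Finset.card_image_le (by simp)
    _ = N ^ (n / 2) * (n / 2) ^ n := by simp

lemma moment_bound {Ω : Type} [MeasureSpace Ω] [IsProbabilityMeasure (volume : Measure Ω)]
    {ι : Type} {f : ι → Ω → ℝ}
    (hindep : iIndepFun f volume)
    (hmeas : ∀ i, Measurable (f i))
    (hbd : ∀ i, ∀ᵐ ω ∂(volume : Measure Ω), |f i ω| ≤ 1)
    (hmean : ∀ i, ∫ ω, f i ω = 0)
    {N n : ℕ} (hn : 0 < n) (b : Fin N → ι) (hb : Function.Injective b) :
    |∫ ω, (∑ j, f (b j) ω) ^ n| ≤ ((N ^ (n / 2) * (n / 2) ^ n : ℕ) : ℝ) := by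
  classical
  have hexp : ∀ ω, (∑ j, f (b j) ω) ^ n = ∑ h : Fin n → Fin N, ∏ k, f (b (h k)) ω := by
    intro ω
    calc (∑ j, f (b j) ω) ^ n = ∏ _k : Fin n, (∑ j, f (b j) ω) := by simp
      _ = ∑ h ∈ Fintype.piFinset (fun _ : Fin n => (Finset.univ : Finset (Fin N))),
            ∏ k, f (b (h k)) ω := Finset.prod_univ_sum _ _
      _ = ∑ h : Fin n → Fin N, ∏ k, f (b (h k)) ω := by rw [Fintype.piFinset_univ]
  have hint : ∀ h : Fin n → Fin N, Integrable (fun ω => ∏ k, f (b (h k)) ω) := fun h =>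
    my_integrable_of_bound (Finset.measurable_prod _ (fun k _ => hmeas _))
      (prod_bound (fun k => hbd _))
  have hsum : (∫ ω, (∑ j, f (b j) ω) ^ n) = ∑ h : Fin n → Fin N, ∫ ω, ∏ k, f (b (h k)) ω := by
    simp_rw [hexp]
    exact integral_finset_sum _ (fun h _ => hint h)
  rw [hsum]
  set P : (Fin n → Fin N) → Prop := fun h => ∀ k, ∃ l, l ≠ k ∧ h l = h k with hP
  calc |∑ h : Fin n → Fin N, ∫ ω, ∏ k, f (b (h k)) ω|
      ≤ ∑ h : Fin n → Fin N, |∫ ω, ∏ k, f (b (h k)) ω| := Finset.abs_sum_le_sum_abs _ _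
    _ = ∑ h ∈ Finset.univ.filter P, |∫ ω, ∏ k, f (b (h k)) ω| := by
        refine (Finset.sum_subset (Finset.filter_subset _ _) ?_).symm
        intro h _ hh
        rw [Finset.mem_filter, not_and] at hh
        have hnp := hh (Finset.mem_univ h)
        simp only [hP] at hnp
        push_neg at hnp
        obtain ⟨k0, hk0⟩ := hnp
        have : ∫ ω, ∏ k, f (b (h k)) ω = 0 := by
          refine integral_prod_eq_zero hindep hmeas hbd hmean (fun k => b (h k)) k0 ?_
          intro k hk hbk
          exact hk0 k hk (hb hbk)
        simp [this]
    _ ≤ ∑ _h ∈ Finset.univ.filter P, (1 : ℝ) := by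
        refine Finset.sum_le_sum (fun h _ => ?_)
        exact my_abs_integral_le (Finset.measurable_prod _ (fun k _ => hmeas _)) zero_le_one
          (prod_bound (fun k => hbd _))
    _ = ((Finset.univ.filter P).card : ℝ) := by simp
    _ ≤ ((N ^ (n / 2) * (n / 2) ^ n : ℕ) : ℝ) := by
        exact_mod_cast Nat.cast_le.2 (by exact_mod_cast card_nosingleton N n hn)

/-- There is a universal constant `C` such that for any independent mean-zero random
variables `u_{ijt}` bounded by 1 in absolute value, the cubic term
`S = Σ_{i,t} (Σ_j u_{ijt})³` satisfies `E[S²] ≤ C·N³T·(N²T + 1)`: the second moment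
splits into a diagonal term of order `N³T·N²` and a cross term involving products
of third moments. -/
theorem cubic_term_second_moment_bound :
    ∃ C : ℝ, 0 < C ∧
      ∀ (N T : ℕ) (Ω : Type) (_ : MeasureSpace Ω),
        IsProbabilityMeasure (volume : Measure Ω) →
        ∀ (u : Fin N → Fin N → Fin T → Ω → ℝ),
          (∀ i j t, Measurable (u i j t)) →
          iIndepFun
            (fun p : Fin N × Fin N × Fin T => u p.1 p.2.1 p.2.2) volume →
          (∀ i j t, ∫ ω, u i j t ω = 0) →
          (∀ i j t, ∀ᵐ ω ∂(volume : Measure Ω), |u i j t ω| ≤ 1) →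
          (∫ ω, (∑ i, ∑ t, (∑ j, u i j t ω) ^ 3) ^ 2)
            ≤ C * ((N : ℝ) ^ 3 * T * ((N : ℝ) ^ 2 * T + 1)) := by
  classical
  refine ⟨730, by norm_num, ?_⟩
  intro N T Ω _ hprob u humeas hindep humean hubd
  haveI := hprob
  set f : Fin N × Fin N × Fin T → Ω → ℝ := fun p => u p.1 p.2.1 p.2.2 with hf
  have hfmeas : ∀ p, Measurable (f p) := fun p => humeas _ _ _
  have hfbd : ∀ p, ∀ᵐ ω ∂(volume : Measure Ω), |f p ω| ≤ 1 := fun p => hubd _ _ _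
  have hfmean : ∀ p, ∫ ω, f p ω = 0 := fun p => humean _ _ _
  set Z : Fin N × Fin T → Ω → ℝ := fun k ω => (∑ j, u k.1 j k.2 ω) ^ 3 with hZ
  set b : Fin N × Fin T → Fin N → Fin N × Fin N × Fin T := fun k j => (k.1, j, k.2) with hbdef
  have hbinj : ∀ k, Function.Injective (b k) := by
    intro k j j' hj
    simpa [hbdef, Prod.ext_iff] using hj
  -- third moment bound
  have E3 : ∀ k, |∫ ω, Z k ω| ≤ (N : ℝ) := by
    intro k
    have := moment_bound hindep hfmeas hfbd hfmean (n := 3) (by norm_num) (b k) (hbinj k)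
    simpa using this
  -- sixth moment bound
  have E6 : ∀ k, (∫ ω, Z k ω * Z k ω) ≤ 729 * (N : ℝ) ^ 3 := by
    intro k
    have h6 := moment_bound hindep hfmeas hfbd hfmean (n := 6) (by norm_num) (b k) (hbinj k)
    have heq : (∫ ω, Z k ω * Z k ω) = ∫ ω, (∑ j, f (b k j) ω) ^ 6 := by
      congr 1; ext ω; rw [hZ]; ring_nf; rfl
    rw [heq]
    calc (∫ ω, (∑ j, f (b k j) ω) ^ 6) ≤ |∫ ω, (∑ j, f (b k j) ω) ^ 6| := le_abs_self _
      _ ≤ ((N ^ (6 / 2) * (6 / 2) ^ 6 : ℕ) : ℝ) := h6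
      _ = 729 * (N : ℝ) ^ 3 := by push_cast; ring
  -- basic facts about Z
  have hZmeas : ∀ k, Measurable (Z k) := by
    intro k
    exact (Finset.measurable_sum _ (fun j _ => humeas _ _ _)).pow_const 3
  have hZbd : ∀ k, ∀ᵐ ω ∂(volume : Measure Ω), |Z k ω| ≤ (N : ℝ) ^ 3 := by
    intro k
    filter_upwards [ae_all_iff.2 (fun j : Fin N => hubd k.1 j k.2)] with ω hω
    rw [hZ]
    calc |(∑ j, u k.1 j k.2 ω) ^ 3| = |∑ j, u k.1 j k.2 ω| ^ 3 := by rw [abs_pow]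
      _ ≤ (N : ℝ) ^ 3 := by
          refine pow_le_pow_left₀ (abs_nonneg _) ?_ 3
          calc |∑ j, u k.1 j k.2 ω| ≤ ∑ j, |u k.1 j k.2 ω| := Finset.abs_sum_le_sum_abs _ _
            _ ≤ ∑ _j : Fin N, (1 : ℝ) := Finset.sum_le_sum (fun j _ => hω j)
            _ = (N : ℝ) := by simp
  have hZint : ∀ k, Integrable (Z k) := fun k => my_integrable_of_bound (hZmeas k) (hZbd k)
  have hZZint : ∀ k k', Integrable (fun ω => Z k ω * Z k' ω) := by
    intro k k'
    refine my_integrable_of_bound (c := (N:ℝ)^3 * (N:ℝ)^3) ((hZmeas k).mul (hZmeas k')) ?_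
    filter_upwards [hZbd k, hZbd k'] with ω h1 h2
    rw [abs_mul]
    exact mul_le_mul h1 h2 (abs_nonneg _) (by positivity)
  -- independence of distinct blocks
  have hindepZ : ∀ k k', k ≠ k' → IndepFun (Z k) (Z k') (volume : Measure Ω) := by
    intro k k' hkk
    set S1 : Finset (Fin N × Fin N × Fin T) := Finset.univ.image (b k) with hS1
    set S2 : Finset (Fin N × Fin N × Fin T) := Finset.univ.image (b k') with hS2
    have hdisj : Disjoint S1 S2 := by
      rw [Finset.disjoint_left]
      intro x hx1 hx2
      rw [hS1, Finset.mem_image] at hx1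
      rw [hS2, Finset.mem_image] at hx2
      obtain ⟨j, -, rfl⟩ := hx1
      obtain ⟨j', -, hj'⟩ := hx2
      apply hkk
      have hj'' : k'.1 = k.1 ∧ j' = j ∧ k'.2 = k.2 := by
        simpa [hbdef, Prod.ext_iff] using hj'
      exact Prod.ext hj''.1.symm hj''.2.2.symm
    have base := hindep.indepFun_finset S1 S2 hdisj hfmeas
    have hφ : Measurable (fun v : S1 → ℝ =>
        (∑ j, v ⟨b k j, Finset.mem_image_of_mem _ (Finset.mem_univ j)⟩) ^ 3) := by
      apply Measurable.pow_const
      apply Finset.measurable_sum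
      intro j _
      exact measurable_pi_apply _
    have hψ : Measurable (fun v : S2 → ℝ =>
        (∑ j, v ⟨b k' j, Finset.mem_image_of_mem _ (Finset.mem_univ j)⟩) ^ 3) := by
      apply Measurable.pow_const
      apply Finset.measurable_sum
      intro j _
      exact measurable_pi_apply _
    have hcomp := base.comp hφ hψ
    have e1 : ((fun v : S1 → ℝ =>
        (∑ j, v ⟨b k j, Finset.mem_image_of_mem _ (Finset.mem_univ j)⟩) ^ 3)
          ∘ (fun a (i : S1) => f i a)) = Z k := by
      funext a
      simp only [Function.comp_apply, hZ, hf, hbdef]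
    have e2 : ((fun v : S2 → ℝ =>
        (∑ j, v ⟨b k' j, Finset.mem_image_of_mem _ (Finset.mem_univ j)⟩) ^ 3)
          ∘ (fun a (i : S2) => f i a)) = Z k' := by
      funext a
      simp only [Function.comp_apply, hZ, hf, hbdef]
    rw [e1, e2] at hcomp
    exact hcomp
  -- expand the square
  have hSexp : ∀ ω, (∑ i, ∑ t, (∑ j, u i j t ω) ^ 3) ^ 2
      = ∑ k : Fin N × Fin T, ∑ k' : Fin N × Fin T, Z k ω * Z k' ω := by
    intro ω
    have h1 : (∑ i, ∑ t, (∑ j, u i j t ω) ^ 3) = ∑ k : Fin N × Fin T, Z k ω :=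
      (Fintype.sum_prod_type (f := fun k : Fin N × Fin T => Z k ω)).symm
    rw [h1, sq, Finset.sum_mul_sum]
  have hIexp : (∫ ω, (∑ i, ∑ t, (∑ j, u i j t ω) ^ 3) ^ 2)
      = ∑ k : Fin N × Fin T, ∑ k' : Fin N × Fin T, ∫ ω, Z k ω * Z k' ω := by
    simp_rw [hSexp]
    rw [integral_finset_sum _ (fun k _ => integrable_finset_sum _ (fun k' _ => hZZint k k'))]
    exact Finset.sum_congr rfl (fun k _ => integral_finset_sum _ (fun k' _ => hZZint k k'))
  rw [hIexp]
  -- bound each term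
  have hterm : ∀ k k' : Fin N × Fin T, (∫ ω, Z k ω * Z k' ω)
      ≤ (N : ℝ) ^ 2 + 729 * (N : ℝ) ^ 3 := by
    intro k k'
    by_cases hkk : k = k'
    · subst hkk
      have := E6 k
      nlinarith [sq_nonneg ((N:ℝ))]
    · have hmul : (∫ ω, Z k ω * Z k' ω) = (∫ ω, Z k ω) * ∫ ω, Z k' ω :=
        (hindepZ k k' hkk).integral_mul_eq_mul_integral (hZint k).1 (hZint k').1
      rw [hmul]
      have h1 := E3 k
      have h2 := E3 k'
      have : (∫ ω, Z k ω) * (∫ ω, Z k' ω) ≤ (N : ℝ) ^ 2 := by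
        calc (∫ ω, Z k ω) * (∫ ω, Z k' ω) ≤ |(∫ ω, Z k ω) * (∫ ω, Z k' ω)| := le_abs_self _
          _ = |∫ ω, Z k ω| * |∫ ω, Z k' ω| := abs_mul _ _
          _ ≤ (N : ℝ) * (N : ℝ) := mul_le_mul h1 h2 (abs_nonneg _) (Nat.cast_nonneg N)
          _ = (N : ℝ) ^ 2 := (sq (N:ℝ)).symm
      nlinarith [pow_nonneg (Nat.cast_nonneg (α := ℝ) N) 3]
  have htotal : ∑ k : Fin N × Fin T, ∑ k' : Fin N × Fin T, (∫ ω, Z k ω * Z k' ω)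
      ≤ ((N : ℝ) * T) * (((N : ℝ) * T) * ((N : ℝ) ^ 2 + 729 * (N : ℝ) ^ 3)) := by
    calc ∑ k : Fin N × Fin T, ∑ k' : Fin N × Fin T, (∫ ω, Z k ω * Z k' ω)
        ≤ ∑ _k : Fin N × Fin T, ∑ _k' : Fin N × Fin T, ((N : ℝ) ^ 2 + 729 * (N : ℝ) ^ 3) :=
          Finset.sum_le_sum (fun k _ => Finset.sum_le_sum (fun k' _ => hterm k k'))
      _ = ((N : ℝ) * T) * (((N : ℝ) * T) * ((N : ℝ) ^ 2 + 729 * (N : ℝ) ^ 3)) := by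
          simp [Finset.sum_const, Finset.card_univ, mul_assoc]
          push_cast
          ring
  refine htotal.trans ?_
  rcases Nat.eq_zero_or_pos N with hN | hN
  · subst hN; simp
  · have h1 : (1 : ℝ) ≤ (N : ℝ) := by exact_mod_cast hN
    have hT : (0 : ℝ) ≤ (T : ℝ) := Nat.cast_nonneg T
    have hN0 : (0:ℝ) ≤ (N:ℝ) := Nat.cast_nonneg N
    nlinarith [mul_nonneg (mul_nonneg (sub_nonneg.mpr h1) (pow_nonneg hN0 4)) (sq_nonneg (T:ℝ)),
      mul_nonneg (pow_nonneg hN0 3) hT]
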